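/- Fix N ∈ ℕ, real numbers bₖ ≤ cₖ for 0 ≤ k ≤ N, and real numbers v_H ≥ 0 and v_E ≥ 0. In the Banach space ℓ¹(ℕ, ℝ) of absolutely summable real sequences, consider the set B of all f ∈ ℓ¹ admitting a decomposition f = p + h + e with p, h, e ∈ ℓ¹ such that: p(k) ∈ [bₖ, cₖ] for k ≤ N and p(k) = 0 for k > N; h(k) = 0 for k ≤ N and ‖h‖₁ ≤ v_H; and ‖e‖₁ ≤ v_E. Then B is a convex and closed subset of ℓ¹(ℕ, ℝ). -/

import Mathlib

open scoped ENNReal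
set_option maxHeartbeats 1000000

namespace FunctionBallAux

noncomputable abbrev L1 := lp (fun _ : ℕ => ℝ) 1

lemma summable_abs (g : L1) : Summable fun k => |(g : ℕ → ℝ) k| := by
  have h := (lp.memℓp g).summable (p := 1) (by norm_num)
  simpa using h

lemma norm_eq (g : L1) : ‖g‖ = ∑' k, |(g : ℕ → ℝ) k| := by
  have h := lp.norm_eq_tsum_rpow (p := 1) (by norm_num) g
  simpa using h

lemma memℓp_of_summable {u : ℕ → ℝ} (hu : Summable fun k => |u k|) :
    Memℓp u 1 := memℓp_gen (by simpa using hu)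

lemma eval_continuous (k : ℕ) : Continuous fun g : L1 => (g : ℕ → ℝ) k := by
  have H : LipschitzWith 1 fun g : L1 => (g : ℕ → ℝ) k := by
    apply LipschitzWith.of_dist_le_mul
    intro f g
    have h := lp.norm_apply_le_norm (p := 1) one_ne_zero (f - g) k
    simpa [Real.dist_eq, dist_eq_norm, lp.coeFn_sub, Pi.sub_apply] using h
  exact H.continuous

lemma proj_mem {lo hi x : ℝ} (h : lo ≤ hi) : max lo (min hi x) ∈ Set.Icc lo hi :=
  ⟨le_max_left _ _, max_le h (min_le_left _ _)⟩

lemma proj_dist {lo hi x y : ℝ} (hy : y ∈ Set.Icc lo hi) :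
    |x - max lo (min hi x)| ≤ |x - y| := by
  obtain ⟨h1, h2⟩ := hy
  rcases le_total x lo with hxlo | hlox
  · rw [min_eq_right (hxlo.trans (h1.trans h2)), max_eq_left hxlo,
      abs_of_nonpos (by linarith : x - lo ≤ 0)]
    linarith [neg_abs_le (x - y)]
  · rcases le_total hi x with hhix | hxhi
    · rw [min_eq_left hhix, max_eq_right (h1.trans h2),
        abs_of_nonneg (by linarith : 0 ≤ x - hi)]
      linarith [le_abs_self (x - y)]
    · rw [min_eq_right hxhi, max_eq_right hlox]
      simp [abs_nonneg]

lemma tail_eq (M : ℕ) (g : L1) :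
    ∑' k, |(g : ℕ → ℝ) (k + M)| = ‖g‖ - ∑ k ∈ Finset.range M, |(g : ℕ → ℝ) k| := by
  have h := (summable_abs g).sum_add_tsum_nat_add M
  rw [norm_eq]
  linarith

lemma mem_iff (N : ℕ) (b c : ℕ → ℝ) (hbc : ∀ k ≤ N, b k ≤ c k)
    (vH vE : ℝ) (hvH : 0 ≤ vH) (f : L1) :
    (∃ p h e : L1,
          f = p + h + e ∧
          (∀ k ≤ N, (p : ℕ → ℝ) k ∈ Set.Icc (b k) (c k)) ∧
          (∀ k > N, (p : ℕ → ℝ) k = 0) ∧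
          (∀ k ≤ N, (h : ℕ → ℝ) k = 0) ∧ ‖h‖ ≤ vH ∧ ‖e‖ ≤ vE) ↔
      (∑ k ∈ Finset.range (N + 1),
          |(f : ℕ → ℝ) k - max (b k) (min (c k) ((f : ℕ → ℝ) k))|) +
        max 0 ((∑' k, |(f : ℕ → ℝ) (k + (N + 1))|) - vH) ≤ vE := by
  set M := N + 1 with hM
  constructor
  · rintro ⟨p, h, e, hfe, hpIcc, hp0, hh0, hhn, hen⟩
    have hfk : ∀ k, (f : ℕ → ℝ) k = (p : ℕ → ℝ) k + (h : ℕ → ℝ) k + (e : ℕ → ℝ) k := by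
      intro k; rw [hfe]; simp [lp.coeFn_add]
    have head : ∀ k ∈ Finset.range M,
        |(f : ℕ → ℝ) k - max (b k) (min (c k) ((f : ℕ → ℝ) k))| ≤ |(e : ℕ → ℝ) k| := by
      intro k hk
      have hkN : k ≤ N := Nat.lt_succ_iff.mp (Finset.mem_range.mp hk)
      refine (proj_dist (hpIcc k hkN)).trans ?_
      have : (f : ℕ → ℝ) k - (p : ℕ → ℝ) k = (e : ℕ → ℝ) k := by
        rw [hfk k, hh0 k hkN]; ring
      rw [this]
    have Sh : Summable fun k => |(h : ℕ → ℝ) (k + M)| :=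
      (summable_nat_add_iff M).mpr (summable_abs h)
    have Se : Summable fun k => |(e : ℕ → ℝ) (k + M)| :=
      (summable_nat_add_iff M).mpr (summable_abs e)
    have Sf : Summable fun k => |(f : ℕ → ℝ) (k + M)| :=
      (summable_nat_add_iff M).mpr (summable_abs f)
    have tail_h : ∑' k, |(h : ℕ → ℝ) (k + M)| = ‖h‖ := by
      rw [tail_eq]
      have : ∑ k ∈ Finset.range M, |(h : ℕ → ℝ) k| = 0 :=
        Finset.sum_eq_zero fun k hk =>
          abs_eq_zero.mpr (hh0 k (Nat.lt_succ_iff.mp (Finset.mem_range.mp hk)))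
      rw [this]; ring
    have tail_f_le : ∑' k, |(f : ℕ → ℝ) (k + M)| ≤ ‖h‖ + ∑' k, |(e : ℕ → ℝ) (k + M)| := by
      have hle : ∀ k, |(f : ℕ → ℝ) (k + M)| ≤ |(h : ℕ → ℝ) (k + M)| + |(e : ℕ → ℝ) (k + M)| := by
        intro k
        rw [hfk (k + M), hp0 (k + M) (by omega)]
        simpa using abs_add_le _ _
      calc ∑' k, |(f : ℕ → ℝ) (k + M)|
          ≤ ∑' k, (|(h : ℕ → ℝ) (k + M)| + |(e : ℕ → ℝ) (k + M)|) :=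
            Summable.tsum_le_tsum hle Sf (Sh.add Se)
        _ = (∑' k, |(h : ℕ → ℝ) (k + M)|) + ∑' k, |(e : ℕ → ℝ) (k + M)| := Summable.tsum_add Sh Se
        _ = ‖h‖ + ∑' k, |(e : ℕ → ℝ) (k + M)| := by rw [tail_h]
    have tail_e : ∑' k, |(e : ℕ → ℝ) (k + M)| = ‖e‖ - ∑ k ∈ Finset.range M, |(e : ℕ → ℝ) k| :=
      tail_eq M e
    have head_le : ∑ k ∈ Finset.range M,
        |(f : ℕ → ℝ) k - max (b k) (min (c k) ((f : ℕ → ℝ) k))| ≤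
        ∑ k ∈ Finset.range M, |(e : ℕ → ℝ) k| := Finset.sum_le_sum head
    have tailn : 0 ≤ ∑' k, |(e : ℕ → ℝ) (k + M)| := tsum_nonneg fun k => abs_nonneg _
    have hmax : max 0 ((∑' k, |(f : ℕ → ℝ) (k + M)|) - vH) ≤ ∑' k, |(e : ℕ → ℝ) (k + M)| :=
      max_le tailn (by linarith)
    linarith [le_max_left (0:ℝ) ((∑' k, |(f : ℕ → ℝ) (k + M)|) - vH)]
  · intro hG
    set T := ∑' k, |(f : ℕ → ℝ) (k + M)| with hT
    have hT0 : 0 ≤ T := tsum_nonneg fun k => abs_nonneg _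
    -- the polynomial part
    set pf : ℕ → ℝ := fun k => if k < M then max (b k) (min (c k) ((f : ℕ → ℝ) k)) else 0
      with hpf
    have Sp : Summable fun k => |pf k| := by
      apply summable_of_ne_finset_zero (s := Finset.range M)
      intro k hk
      simp only [Finset.mem_range] at hk
      simp [hpf, if_neg hk]
    set p : L1 := ⟨pf, memℓp_of_summable Sp⟩ with hp
    have hpcoe : (p : ℕ → ℝ) = pf := rfl
    rcases le_or_gt T vH with hTle | hTgt
    · -- tail fits inside vH
      set hf : ℕ → ℝ := fun k => if k < M then 0 else (f : ℕ → ℝ) k with hhf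
      have Shf : Summable fun k => |hf k| := by
        apply Summable.of_nonneg_of_le (fun k => abs_nonneg _) _ (summable_abs f)
        intro k
        by_cases hk : k < M <;> simp [hhf, hk, abs_nonneg]
      set h : L1 := ⟨hf, memℓp_of_summable Shf⟩ with hh
      refine ⟨p, h, f - p - h, by abel, ?_, ?_, ?_, ?_, ?_⟩
      · intro k hk
        have : k < M := by omega
        simp only [hpcoe, hpf, if_pos this]
        exact proj_mem (hbc k hk)
      · intro k hk
        have : ¬ k < M := by omega
        simp [hpcoe, hpf, this]
      · intro k hk
        have : k < M := by omega
        simp [hh, hhf, this]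
      · -- ‖h‖ ≤ vH
        have hcoe : (h : ℕ → ℝ) = hf := rfl
        have hhead : ∑ k ∈ Finset.range M, |hf k| = 0 :=
          Finset.sum_eq_zero fun k hk => by
            simp [hhf, Finset.mem_range.mp hk]
        have htail : ∀ k, hf (k + M) = (f : ℕ → ℝ) (k + M) := by
          intro k; simp [hhf, Nat.not_lt.mpr (Nat.le_add_left M k)]
        have h1 : ∑' k, |hf (k + M)| = ‖h‖ - ∑ k ∈ Finset.range M, |hf k| := tail_eq M h
        simp only [htail] at h1
        rw [hhead, sub_zero] at h1
        linarith
      · -- ‖e‖ ≤ vE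
        set e : L1 := f - p - h with he
        have hecoe : ∀ k, (e : ℕ → ℝ) k = (f : ℕ → ℝ) k - pf k - hf k := by
          intro k; simp [he, lp.coeFn_sub, hpcoe]; rfl
        have etail : ∀ k, (e : ℕ → ℝ) (k + M) = 0 := by
          intro k
          have hk : ¬ k + M < M := by omega
          simp [hecoe, hpf, hhf, hk]
        have htsum : ∑' k, |(e : ℕ → ℝ) (k + M)| = 0 := by
          simp [etail]
        have hnorm := tail_eq M e
        rw [htsum] at hnorm
        have hheadsum : ∑ k ∈ Finset.range M, |(e : ℕ → ℝ) k| =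
            ∑ k ∈ Finset.range M,
              |(f : ℕ → ℝ) k - max (b k) (min (c k) ((f : ℕ → ℝ) k))| := by
          apply Finset.sum_congr rfl
          intro k hk
          have hkM : k < M := Finset.mem_range.mp hk
          rw [hecoe k]
          simp [hpf, hhf, hkM]
        have hmax0 : (0:ℝ) ≤ max 0 (T - vH) := le_max_left _ _
        have : ‖e‖ = ∑ k ∈ Finset.range M,
            |(f : ℕ → ℝ) k - max (b k) (min (c k) ((f : ℕ → ℝ) k))| := by
          rw [← hheadsum]; linarith
        linarith
    · -- tail exceeds vH : scale it
      have hTpos : 0 < T := lt_of_le_of_lt hvH hTgt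
      set t : ℝ := vH / T with ht
      have ht0 : 0 ≤ t := div_nonneg hvH hT0
      have ht1 : t ≤ 1 := (div_le_one hTpos).mpr hTgt.le
      set hf : ℕ → ℝ := fun k => if k < M then 0 else t * (f : ℕ → ℝ) k with hhf
      have Shf : Summable fun k => |hf k| := by
        apply Summable.of_nonneg_of_le (fun k => abs_nonneg _) _
          ((summable_abs f).mul_left t)
        intro k
        by_cases hk : k < M
        · simp [hhf, hk, mul_nonneg ht0 (abs_nonneg _)]
        · simp [hhf, hk, abs_mul, abs_of_nonneg ht0]
      set h : L1 := ⟨hf, memℓp_of_summable Shf⟩ with hh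
      have hcoe : (h : ℕ → ℝ) = hf := rfl
      have htail : ∀ k, hf (k + M) = t * (f : ℕ → ℝ) (k + M) := by
        intro k; simp [hhf, Nat.not_lt.mpr (Nat.le_add_left M k)]
      have hnorm_h : ‖h‖ = vH := by
        have hhead : ∑ k ∈ Finset.range M, |hf k| = 0 :=
          Finset.sum_eq_zero fun k hk => by
            simp [hhf, Finset.mem_range.mp hk]
        have h1 : ∑' k, |hf (k + M)| = ‖h‖ - ∑ k ∈ Finset.range M, |hf k| := tail_eq M h
        simp only [htail, abs_mul, abs_of_nonneg ht0] at h1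
        rw [tsum_mul_left] at h1
        rw [hhead, sub_zero, ← hT] at h1
        rw [ht] at h1
        field_simp at h1
        linarith
      refine ⟨p, h, f - p - h, by abel, ?_, ?_, ?_, le_of_eq hnorm_h, ?_⟩
      · intro k hk
        have : k < M := by omega
        simp only [hpcoe, hpf, if_pos this]
        exact proj_mem (hbc k hk)
      · intro k hk
        have : ¬ k < M := by omega
        simp [hpcoe, hpf, this]
      · intro k hk
        have : k < M := by omega
        simp [hcoe, hhf, this]
      · -- ‖e‖ ≤ vE
        set e : L1 := f - p - h with he
        have hecoe : ∀ k, (e : ℕ → ℝ) k = (f : ℕ → ℝ) k - pf k - hf k := by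
          intro k; simp [he, lp.coeFn_sub, hpcoe]; rfl
        have etail : ∀ k, (e : ℕ → ℝ) (k + M) = (1 - t) * (f : ℕ → ℝ) (k + M) := by
          intro k
          have hk : ¬ k + M < M := by omega
          rw [hecoe]
          simp [hpf, hhf, hk]; ring
        have htsum : ∑' k, |(e : ℕ → ℝ) (k + M)| = (1 - t) * T := by
          simp only [etail, abs_mul, abs_of_nonneg (by linarith : (0:ℝ) ≤ 1 - t)]
          rw [tsum_mul_left]
        have hnorm := tail_eq M e
        rw [htsum] at hnorm
        have hheadsum : ∑ k ∈ Finset.range M, |(e : ℕ → ℝ) k| =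
            ∑ k ∈ Finset.range M,
              |(f : ℕ → ℝ) k - max (b k) (min (c k) ((f : ℕ → ℝ) k))| := by
          apply Finset.sum_congr rfl
          intro k hk
          have hkM : k < M := Finset.mem_range.mp hk
          rw [hecoe k]
          simp [hpf, hhf, hkM]
        have htT : (1 - t) * T = T - vH := by
          rw [ht]; field_simp
        have hmax : max 0 (T - vH) = T - vH := max_eq_right (by linarith)
        rw [hmax] at hG
        linarith
end FunctionBallAux

open FunctionBallAux in
/-- **Function balls are convex and closed.** In `ℓ¹(ℕ, ℝ)`, the standard function
ball — all `f = p + h + e` where the coefficients of the polynomial part `p` lie in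
the intervals `[bₖ, cₖ]` (vanishing above degree `N`), the high-order part `h`
vanishes up to degree `N` with `‖h‖ ≤ v_H`, and the error part `e` has
`‖e‖ ≤ v_E` — is convex and closed. -/
theorem function_ball_convex_closed
    (N : ℕ) (b c : ℕ → ℝ) (hbc : ∀ k ≤ N, b k ≤ c k)
    (vH vE : ℝ) (hvH : 0 ≤ vH) (hvE : 0 ≤ vE) :
    Convex ℝ {f : lp (fun _ : ℕ => ℝ) 1 |
        ∃ p h e : lp (fun _ : ℕ => ℝ) 1,
          f = p + h + e ∧
          (∀ k ≤ N, (p : ℕ → ℝ) k ∈ Set.Icc (b k) (c k)) ∧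
          (∀ k > N, (p : ℕ → ℝ) k = 0) ∧
          (∀ k ≤ N, (h : ℕ → ℝ) k = 0) ∧ ‖h‖ ≤ vH ∧ ‖e‖ ≤ vE} ∧
    IsClosed {f : lp (fun _ : ℕ => ℝ) 1 |
        ∃ p h e : lp (fun _ : ℕ => ℝ) 1,
          f = p + h + e ∧
          (∀ k ≤ N, (p : ℕ → ℝ) k ∈ Set.Icc (b k) (c k)) ∧
          (∀ k > N, (p : ℕ → ℝ) k = 0) ∧
          (∀ k ≤ N, (h : ℕ → ℝ) k = 0) ∧ ‖h‖ ≤ vH ∧ ‖e‖ ≤ vE} := by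
  constructor
  · -- Convexity, directly from the decompositions
    rintro f₁ ⟨p₁, h₁, e₁, hf₁, hpI₁, hpz₁, hhz₁, hhn₁, hen₁⟩
      f₂ ⟨p₂, h₂, e₂, hf₂, hpI₂, hpz₂, hhz₂, hhn₂, hen₂⟩ a β ha hb hab
    refine ⟨a • p₁ + β • p₂, a • h₁ + β • h₂, a • e₁ + β • e₂, ?_, ?_, ?_, ?_, ?_, ?_⟩
    · rw [hf₁, hf₂]; module
    · intro k hk
      have hco : ((a • p₁ + β • p₂ : lp (fun _ : ℕ => ℝ) 1) : ℕ → ℝ) k =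
          a • ((p₁ : ℕ → ℝ) k) + β • ((p₂ : ℕ → ℝ) k) := by
        simp [lp.coeFn_add, lp.coeFn_smul, Pi.add_apply, Pi.smul_apply, smul_eq_mul]; rfl
      rw [hco]
      exact (convex_Icc (b k) (c k)) (hpI₁ k hk) (hpI₂ k hk) ha hb hab
    · intro k hk
      simp [lp.coeFn_add, lp.coeFn_smul, Pi.add_apply, Pi.smul_apply, hpz₁ k hk, hpz₂ k hk]
      change a * (p₁ : ℕ → ℝ) k + β * (p₂ : ℕ → ℝ) k = 0
      simp [hpz₁ k hk, hpz₂ k hk]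
    · intro k hk
      simp [lp.coeFn_add, lp.coeFn_smul, Pi.add_apply, Pi.smul_apply, hhz₁ k hk, hhz₂ k hk]
      change a * (h₁ : ℕ → ℝ) k + β * (h₂ : ℕ → ℝ) k = 0
      simp [hhz₁ k hk, hhz₂ k hk]
    · calc ‖a • h₁ + β • h₂‖ ≤ ‖a • h₁‖ + ‖β • h₂‖ := norm_add_le _ _
        _ = a * ‖h₁‖ + β * ‖h₂‖ := by
            rw [norm_smul, norm_smul, Real.norm_eq_abs, Real.norm_eq_abs,
              abs_of_nonneg ha, abs_of_nonneg hb]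
        _ ≤ a * vH + β * vH := by
            gcongr
        _ = vH := by rw [← add_mul, hab, one_mul]
    · calc ‖a • e₁ + β • e₂‖ ≤ ‖a • e₁‖ + ‖β • e₂‖ := norm_add_le _ _
        _ = a * ‖e₁‖ + β * ‖e₂‖ := by
            rw [norm_smul, norm_smul, Real.norm_eq_abs, Real.norm_eq_abs,
              abs_of_nonneg ha, abs_of_nonneg hb]
        _ ≤ a * vE + β * vE := by
            gcongr
        _ = vE := by rw [← add_mul, hab, one_mul]
  · -- Closedness: the set is a sublevel set of a continuous function
    have hset : {f : lp (fun _ : ℕ => ℝ) 1 |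
        ∃ p h e : lp (fun _ : ℕ => ℝ) 1,
          f = p + h + e ∧
          (∀ k ≤ N, (p : ℕ → ℝ) k ∈ Set.Icc (b k) (c k)) ∧
          (∀ k > N, (p : ℕ → ℝ) k = 0) ∧
          (∀ k ≤ N, (h : ℕ → ℝ) k = 0) ∧ ‖h‖ ≤ vH ∧ ‖e‖ ≤ vE} =
        (fun f : lp (fun _ : ℕ => ℝ) 1 =>
          (∑ k ∈ Finset.range (N + 1),
            |(f : ℕ → ℝ) k - max (b k) (min (c k) ((f : ℕ → ℝ) k))|) +
          max 0 ((‖f‖ - ∑ k ∈ Finset.range (N + 1), |(f : ℕ → ℝ) k|) - vH)) ⁻¹'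
            Set.Iic vE := by
      ext f
      rw [Set.mem_setOf_eq, Set.mem_preimage, Set.mem_Iic,
        mem_iff N b c hbc vH vE hvH f, tail_eq (N + 1) f]
    rw [hset]
    apply IsClosed.preimage _ isClosed_Iic
    apply Continuous.add
    · apply continuous_finset_sum
      intro k _
      exact ((eval_continuous k).sub
        (Continuous.max continuous_const
          (Continuous.min continuous_const (eval_continuous k)))).abs
    · exact Continuous.max continuous_const
        ((continuous_norm.sub
          (continuous_finset_sum _ fun k _ => (eval_continuous k).abs)).sub
          continuous_const)
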